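/- For every n ∈ ℕ, the square matrix over ℝ indexed by the nonempty subsets of [n] = {1,...,n}, whose (y, z) entry is 1 if y ∩ z ≠ ∅ and 0 otherwise, is invertible. -/

import Mathlib

open Finset Matrix

lemma sum_pow_real {α} [DecidableEq α] (x : Finset α) :
    ∑ m ∈ x.powerset, (-1 : ℝ) ^ m.card = if x = ∅ then 1 else 0 := by
  have h := Finset.sum_powerset_neg_one_pow_card (x := x)
  have := congrArg (Int.cast : ℤ → ℝ) h
  push_cast at this
  convert this

lemma sum_subtype_ne (n : ℕ) (f : Finset (Fin n) → ℝ) :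
    ∑ S : {s : Finset (Fin n) // s.Nonempty}, f S.1
      = ∑ S ∈ (Finset.univ : Finset (Fin n)).powerset.filter Finset.Nonempty, f S := by
  refine (Finset.sum_subtype _ (fun x => ?_) f).symm
  simp

lemma lemA {n : ℕ} (A C : Finset (Fin n)) (hC : C.Nonempty) :
    ∑ S ∈ (Finset.univ : Finset (Fin n)).powerset.filter Finset.Nonempty,
      (if S ⊆ A then (1:ℝ) else 0) * (if C ⊆ S then (-1:ℝ)^S.card * (-1)^C.card else 0)
    = if A = C then 1 else 0 := by
  classical
  have hsimp : ∀ S : Finset (Fin n),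
      (if S ⊆ A then (1:ℝ) else 0) * (if C ⊆ S then (-1:ℝ)^S.card * (-1)^C.card else 0)
      = if S ⊆ A ∧ C ⊆ S then (-1:ℝ)^S.card * (-1)^C.card else 0 := by
    intro S; split_ifs with h1 h2 h3 <;> simp_all
  simp only [hsimp]
  rw [← Finset.sum_filter]
  have hset : ((Finset.univ : Finset (Fin n)).powerset.filter Finset.Nonempty).filter
      (fun S => S ⊆ A ∧ C ⊆ S) = A.powerset.filter (fun S => C ⊆ S) := by
    ext S
    simp only [Finset.mem_filter, Finset.mem_powerset, Finset.subset_univ, true_and]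
    constructor
    · rintro ⟨_, h1, h2⟩; exact ⟨h1, h2⟩
    · rintro ⟨h1, h2⟩; exact ⟨hC.mono h2, h1, h2⟩
  rw [hset]
  by_cases hCA : C ⊆ A
  · have key : ∑ S ∈ A.powerset.filter (fun S => C ⊆ S), (-1:ℝ)^S.card * (-1)^C.card
        = ∑ T ∈ (A \ C).powerset, (-1:ℝ)^T.card := by
      refine Finset.sum_bij' (fun S _ => S \ C) (fun T _ => C ∪ T) ?_ ?_ ?_ ?_ ?_
      · intro S hS
        simp only [Finset.mem_filter, Finset.mem_powerset] at hS ⊢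
        exact Finset.sdiff_subset_sdiff hS.1 (le_refl _)
      · intro T hT
        simp only [Finset.mem_powerset] at hT
        simp only [Finset.mem_filter, Finset.mem_powerset]
        exact ⟨Finset.union_subset hCA (hT.trans (Finset.sdiff_subset)), Finset.subset_union_left⟩
      · intro S hS
        simp only [Finset.mem_filter] at hS
        exact Finset.union_sdiff_of_subset hS.2
      · intro T hT
        simp only [Finset.mem_powerset] at hT
        exact Finset.union_sdiff_cancel_left
          (Finset.disjoint_left.mpr fun a haC haT => (Finset.mem_sdiff.mp (hT haT)).2 haC)
      · intro S hS
        simp only [Finset.mem_filter, Finset.mem_powerset] at hS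
        have hcard : S.card = (S \ C).card + C.card :=
          (Finset.card_sdiff_add_card_eq_card hS.2).symm
        rw [hcard, pow_add, mul_assoc, ← pow_add, ← two_mul, pow_mul, neg_one_sq, one_pow,
          mul_one]
    rw [key, sum_pow_real]
    by_cases h : A = C
    · rw [if_pos h, if_pos (by rw [h]; exact Finset.sdiff_self C)]
    · rw [if_neg h, if_neg (fun he => h
        (Finset.Subset.antisymm (Finset.sdiff_eq_empty_iff_subset.mp he) hCA))]
  · have hempty : A.powerset.filter (fun S => C ⊆ S) = ∅ :=
      Finset.filter_false_of_mem fun S hS hCS =>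
        hCA (hCS.trans (Finset.mem_powerset.mp hS))
    rw [hempty, Finset.sum_empty, if_neg (by rintro rfl; exact hCA le_rfl)]

lemma lemB {n : ℕ} (A C : Finset (Fin n)) :
    ∑ S ∈ (Finset.univ : Finset (Fin n)).powerset.filter Finset.Nonempty,
      (if S ⊆ A then (1:ℝ) else 0) * ((-1:ℝ)^(S.card+1) * (if S ⊆ C then 1 else 0))
    = if (A ∩ C).Nonempty then 1 else 0 := by
  classical
  have hsimp : ∀ S : Finset (Fin n),
      (if S ⊆ A then (1:ℝ) else 0) * ((-1:ℝ)^(S.card+1) * (if S ⊆ C then 1 else 0))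
      = if S ⊆ A ∩ C then (-1:ℝ)^(S.card+1) else 0 := by
    intro S
    by_cases h1 : S ⊆ A <;> by_cases h2 : S ⊆ C <;>
      simp [h1, h2, Finset.subset_inter_iff]
  simp only [hsimp]
  rw [← Finset.sum_filter]
  have hset : ((Finset.univ : Finset (Fin n)).powerset.filter Finset.Nonempty).filter
      (fun S => S ⊆ A ∩ C) = (A ∩ C).powerset.filter Finset.Nonempty := by
    ext S
    simp only [Finset.mem_filter, Finset.mem_powerset, Finset.subset_univ, true_and]
    tauto
  rw [hset]
  have hsplit := Finset.sum_filter_add_sum_filter_not (A ∩ C).powerset Finset.Nonempty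
    (fun S => (-1:ℝ)^S.card)
  have hneg : (A ∩ C).powerset.filter (fun S => ¬ S.Nonempty) = {∅} := by
    ext S
    simp only [Finset.mem_filter, Finset.mem_powerset, Finset.not_nonempty_iff_eq_empty,
      Finset.mem_singleton]
    constructor
    · rintro ⟨_, rfl⟩; rfl
    · rintro rfl; exact ⟨Finset.empty_subset _, rfl⟩
  rw [hneg, Finset.sum_singleton, sum_pow_real] at hsplit
  have hstep : ∑ S ∈ (A ∩ C).powerset.filter Finset.Nonempty, (-1:ℝ)^(S.card+1)
      = ∑ S ∈ (A ∩ C).powerset.filter Finset.Nonempty, -((-1:ℝ)^S.card) :=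
    Finset.sum_congr rfl fun S _ => by rw [pow_succ, mul_neg_one]
  rw [hstep, Finset.sum_neg_distrib]
  simp only [Finset.card_empty, pow_zero] at hsplit
  have h2 : ∑ S ∈ (A ∩ C).powerset.filter Finset.Nonempty, (-1:ℝ)^S.card
      = (if A ∩ C = ∅ then 1 else 0) - 1 := by linarith
  rw [h2]
  by_cases h : (A ∩ C).Nonempty
  · rw [if_pos h, if_neg (Finset.nonempty_iff_ne_empty.mp h)]; ring
  · rw [if_neg h, if_pos (Finset.not_nonempty_iff_eq_empty.mp h)]; ring

theorem statement17 (n : ℕ) (hn : 1 ≤ n) :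
    IsUnit (Matrix.of fun y z : {s : Finset (Fin n) // s.Nonempty} =>
      if (y.1 ∩ z.1).Nonempty then (1 : ℝ) else 0) := by
  classical
  set ι := {s : Finset (Fin n) // s.Nonempty}
  set Z : Matrix ι ι ℝ := Matrix.of (fun A S => if S.1 ⊆ A.1 then 1 else 0) with hZdef
  set W : Matrix ι ι ℝ :=
    Matrix.of (fun S B => if B.1 ⊆ S.1 then (-1:ℝ)^S.1.card * (-1)^B.1.card else 0) with hWdef
  set D : Matrix ι ι ℝ := Matrix.diagonal (fun S => (-1:ℝ)^(S.1.card+1)) with hDdef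
  have hZW : Z * W = 1 := by
    ext A C
    rw [Matrix.mul_apply]
    simp only [hZdef, hWdef, Matrix.of_apply]
    rw [sum_subtype_ne n (fun X => (if X ⊆ A.1 then (1:ℝ) else 0) *
      (if C.1 ⊆ X then (-1:ℝ)^X.card * (-1)^C.1.card else 0)), lemA A.1 C.1 C.2]
    rw [Matrix.one_apply]
    exact if_congr Subtype.ext_iff.symm rfl rfl
  have hZ : IsUnit Z := by
    have := invertibleOfRightInverse (a := Z) (b := W) hZW
    exact isUnit_of_invertible Z
  have hZt : IsUnit Zᵀ := by
    have h1 : Wᵀ * Zᵀ = 1 := by rw [← Matrix.transpose_mul, hZW, Matrix.transpose_one]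
    have := invertibleOfLeftInverse (a := Zᵀ) (b := Wᵀ) h1
    exact isUnit_of_invertible _
  have hD : IsUnit D := by
    have hDD : D * D = 1 := by
      rw [hDdef, Matrix.diagonal_mul_diagonal]
      have : (fun S : ι => (-1:ℝ)^(S.1.card+1) * (-1:ℝ)^(S.1.card+1)) = fun _ => (1:ℝ) := by
        funext S
        rw [← pow_add, ← two_mul, pow_mul, neg_one_sq, one_pow]
      rw [this, Matrix.diagonal_one]
    have := invertibleOfRightInverse (a := D) (b := D) hDD
    exact isUnit_of_invertible D
  have hM : (Matrix.of fun y z : ι => if (y.1 ∩ z.1).Nonempty then (1 : ℝ) else 0)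
      = Z * D * Zᵀ := by
    ext A C
    simp only [Matrix.of_apply]
    rw [Matrix.mul_apply]
    symm
    have h0 : ∀ x : ι, (Z * D) A x * Zᵀ x C = (if x.1 ⊆ A.1 then (1:ℝ) else 0) *
        ((-1:ℝ)^(x.1.card+1) * (if x.1 ⊆ C.1 then 1 else 0)) := by
      intro x
      rw [Matrix.mul_diagonal, Matrix.transpose_apply]
      simp only [hZdef, Matrix.of_apply]
      ring
    rw [Finset.sum_congr rfl fun x _ => h0 x]
    rw [sum_subtype_ne n (fun X => (if X ⊆ A.1 then (1:ℝ) else 0) *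
      ((-1:ℝ)^(X.card+1) * (if X ⊆ C.1 then 1 else 0)))]
    exact lemB A.1 C.1
  rw [hM]
  exact (hZ.mul hD).mul hZt
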